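/- For every regular expression α of alphabetic width n ≥ 1, there exists an NFA with n + 1 states recognizing L(α), having a unique non-reenterable initial state, and remembering the last symbol (i.e., there is a partition of the non-initial states into sets Q_a, a ∈ Σ, such that all transitions by symbol a lead into Q_a). -/

import Mathlib

/-- Alphabetic width of a regular expression: the number of occurrences of
alphabet symbols. -/
def alphabeticWidth {α : Type} : RegularExpression α → ℕ
  | RegularExpression.zero => 0
  | RegularExpression.epsilon => 0
  | RegularExpression.char _ => 1
  | RegularExpression.plus r s => alphabeticWidth r + alphabeticWidth s
  | RegularExpression.comp r s => alphabeticWidth r + alphabeticWidth s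
  | RegularExpression.star r => alphabeticWidth r


namespace GluAux
open Computability

structure Glu (σ : Type) (P : Type) where
  d : Option P → σ → Set P
  eps : Prop
  F : Set P
  label : P → σ
  hl : ∀ q a p, p ∈ d q a → label p = a

variable {σ : Type} {P P₁ P₂ : Type}

def Glu.nfa (G : Glu σ P) : NFA σ (Option P) where
  step q a := some '' G.d q a
  start := {none}
  accept := {q | q.elim G.eps (· ∈ G.F)}

lemma Glu.eval_nil (G : Glu σ P) : G.nfa.eval [] = {none} := rfl

lemma Glu.some_mem_step (G : Glu σ P) (q : Option P) (a : σ) (p : P) :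
    some p ∈ G.nfa.step q a ↔ p ∈ G.d q a := by
  simp [Glu.nfa]

lemma Glu.none_mem_eval (G : Glu σ P) (w : List σ) :
    (none ∈ G.nfa.eval w) ↔ w = [] := by
  rcases List.eq_nil_or_concat w with rfl | ⟨w', a, rfl⟩
  · simp [Glu.eval_nil, Glu.nfa]
  · rw [List.concat_eq_append]
    constructor
    · intro h
      rw [NFA.eval, NFA.evalFrom_append, NFA.evalFrom_singleton, NFA.mem_stepSet] at h
      obtain ⟨q, -, hq⟩ := h
      simp [Glu.nfa] at hq
    · intro h; simp at h

lemma Glu.some_mem_eval_snoc (G : Glu σ P) (w : List σ) (a : σ) (p : P) :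
    some p ∈ G.nfa.eval (w ++ [a]) ↔
      (w = [] ∧ p ∈ G.d none a) ∨
        ∃ p', some p' ∈ G.nfa.eval w ∧ p ∈ G.d (some p') a := by
  rw [NFA.eval, NFA.evalFrom_append, NFA.evalFrom_singleton, NFA.mem_stepSet]
  constructor
  · rintro ⟨q, hq, hstep⟩
    rw [G.some_mem_step] at hstep
    match q with
    | none => exact Or.inl ⟨(G.none_mem_eval w).1 hq, hstep⟩
    | some p' => exact Or.inr ⟨p', hq, hstep⟩
  · rintro (⟨rfl, hp⟩ | ⟨p', hp', hd⟩)
    · exact ⟨none, by simp [Glu.nfa, NFA.evalFrom], (G.some_mem_step _ _ _).2 hp⟩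
    · exact ⟨some p', hp', (G.some_mem_step _ _ _).2 hd⟩

lemma Glu.mem_accepts (G : Glu σ P) (w : List σ) :
    w ∈ G.nfa.accepts ↔ (w = [] ∧ G.eps) ∨ ∃ p ∈ G.F, some p ∈ G.nfa.eval w := by
  rw [NFA.mem_accepts]
  constructor
  · rintro ⟨q, hacc, hev⟩
    match q with
    | none => exact Or.inl ⟨(G.none_mem_eval w).1 hev, hacc⟩
    | some p => exact Or.inr ⟨p, hacc, hev⟩
  · rintro (⟨rfl, he⟩ | ⟨p, hF, hev⟩)
    · exact ⟨none, he, by simp [Glu.nfa, NFA.evalFrom]⟩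
    · exact ⟨some p, hF, hev⟩


/-! ### Constructions -/

def gzero : Glu σ Empty where
  d _ _ := ∅
  eps := False
  F := ∅
  label := Empty.elim
  hl _ _ p hp := absurd hp (Set.notMem_empty p)

def geps : Glu σ Empty where
  d _ _ := ∅
  eps := True
  F := ∅
  label := Empty.elim
  hl _ _ p hp := absurd hp (Set.notMem_empty p)

def gchar (a : σ) : Glu σ Unit where
  d q b := {_p | q = none ∧ b = a}
  eps := False
  F := Set.univ
  label _ := a
  hl _ _ _ hp := hp.2.symm

def gplus (G₁ : Glu σ P₁) (G₂ : Glu σ P₂) : Glu σ (P₁ ⊕ P₂) where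
  d q a :=
    match q with
    | none => Sum.inl '' G₁.d none a ∪ Sum.inr '' G₂.d none a
    | some (Sum.inl p) => Sum.inl '' G₁.d (some p) a
    | some (Sum.inr p) => Sum.inr '' G₂.d (some p) a
  eps := G₁.eps ∨ G₂.eps
  F := fun x => Sum.elim (· ∈ G₁.F) (· ∈ G₂.F) x
  label := Sum.elim G₁.label G₂.label
  hl q a p hp := by
    match q, p with
    | none, p =>
      rcases hp with ⟨p', hp', rfl⟩ | ⟨p', hp', rfl⟩
      · exact G₁.hl _ _ _ hp'
      · exact G₂.hl _ _ _ hp'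
    | some (Sum.inl p'), p =>
      obtain ⟨p'', hp'', rfl⟩ := hp
      exact G₁.hl _ _ _ hp''
    | some (Sum.inr p'), p =>
      obtain ⟨p'', hp'', rfl⟩ := hp
      exact G₂.hl _ _ _ hp''

def gcomp (G₁ : Glu σ P₁) (G₂ : Glu σ P₂) : Glu σ (P₁ ⊕ P₂) where
  d q a :=
    match q with
    | none => Sum.inl '' G₁.d none a ∪ {x | G₁.eps ∧ x ∈ Sum.inr '' G₂.d none a}
    | some (Sum.inl p) =>
        Sum.inl '' G₁.d (some p) a ∪ {x | p ∈ G₁.F ∧ x ∈ Sum.inr '' G₂.d none a}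
    | some (Sum.inr p) => Sum.inr '' G₂.d (some p) a
  eps := G₁.eps ∧ G₂.eps
  F := fun x => Sum.elim (fun p => p ∈ G₁.F ∧ G₂.eps) (· ∈ G₂.F) x
  label := Sum.elim G₁.label G₂.label
  hl q a p hp := by
    match q, p with
    | none, p =>
      rcases hp with ⟨p', hp', rfl⟩ | ⟨-, p', hp', rfl⟩
      · exact G₁.hl _ _ _ hp'
      · exact G₂.hl _ _ _ hp'
    | some (Sum.inl p'), p =>
      rcases hp with ⟨p'', hp'', rfl⟩ | ⟨-, p'', hp'', rfl⟩
      · exact G₁.hl _ _ _ hp''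
      · exact G₂.hl _ _ _ hp''
    | some (Sum.inr p'), p =>
      obtain ⟨p'', hp'', rfl⟩ := hp
      exact G₂.hl _ _ _ hp''

def gstar (G₁ : Glu σ P₁) : Glu σ P₁ where
  d q a :=
    match q with
    | none => G₁.d none a
    | some p => G₁.d (some p) a ∪ {x | p ∈ G₁.F ∧ x ∈ G₁.d none a}
  eps := True
  F := G₁.F
  label := G₁.label
  hl q a p hp := by
    match q with
    | none => exact G₁.hl _ _ _ hp
    | some p' =>
      rcases hp with hp | ⟨-, hp⟩
      · exact G₁.hl _ _ _ hp
      · exact G₁.hl _ _ _ hp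


/-! ### Language correctness -/

lemma accepts_gzero : (gzero (σ := σ)).nfa.accepts = 0 := by
  ext w
  rw [Glu.mem_accepts]
  simp [gzero]

lemma accepts_geps : (geps (σ := σ)).nfa.accepts = 1 := by
  ext w
  rw [Glu.mem_accepts]
  simp [geps]

lemma gchar_eval (a : σ) (w : List σ) (p : Unit) :
    some p ∈ (gchar a).nfa.eval w ↔ w = [a] := by
  rcases List.eq_nil_or_concat w with rfl | ⟨w', b, rfl⟩
  · simp [Glu.eval_nil, Glu.nfa]
  · rw [List.concat_eq_append, Glu.some_mem_eval_snoc]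
    constructor
    · rintro (⟨rfl, -, rfl⟩ | ⟨p', -, h, -⟩)
      · rfl
      · exact absurd h (by simp)
    · intro h
      have hw : w' = [] := by
        have := congrArg List.length h
        simpa using this
      subst hw
      simp only [List.nil_append, List.cons.injEq] at h
      exact Or.inl ⟨rfl, rfl, h.1⟩

lemma accepts_gchar (a : σ) : (gchar a).nfa.accepts = {[a]} := by
  ext w
  rw [Glu.mem_accepts]
  constructor
  · rintro (⟨-, h⟩ | ⟨p, -, h⟩)
    · simp [gchar] at h
    · exact (gchar_eval a w p).1 h
  · intro h
    exact Or.inr ⟨(), Set.mem_univ (), (gchar_eval a w ()).2 h⟩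


lemma gplus_d_none (G₁ : Glu σ P₁) (G₂ : Glu σ P₂) (a : σ) :
    (gplus G₁ G₂).d none a = Sum.inl '' G₁.d none a ∪ Sum.inr '' G₂.d none a := rfl

lemma gplus_d_inl (G₁ : Glu σ P₁) (G₂ : Glu σ P₂) (p : P₁) (a : σ) :
    (gplus G₁ G₂).d (some (Sum.inl p)) a = Sum.inl '' G₁.d (some p) a := rfl

lemma gplus_d_inr (G₁ : Glu σ P₁) (G₂ : Glu σ P₂) (p : P₂) (a : σ) :
    (gplus G₁ G₂).d (some (Sum.inr p)) a = Sum.inr '' G₂.d (some p) a := rfl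

lemma gplus_eval (G₁ : Glu σ P₁) (G₂ : Glu σ P₂) (w : List σ) :
    (∀ p, some (Sum.inl p) ∈ (gplus G₁ G₂).nfa.eval w ↔ some p ∈ G₁.nfa.eval w) ∧
    (∀ p, some (Sum.inr p) ∈ (gplus G₁ G₂).nfa.eval w ↔ some p ∈ G₂.nfa.eval w) := by
  induction w using List.reverseRecOn with
  | nil => simp [Glu.eval_nil, Glu.nfa]
  | append_singleton w a ih =>
    obtain ⟨ih1, ih2⟩ := ih
    constructor
    · intro p
      rw [Glu.some_mem_eval_snoc, Glu.some_mem_eval_snoc]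
      constructor
      · rintro (⟨rfl, hd⟩ | ⟨p', hp', hd⟩)
        · rw [gplus_d_none] at hd
          rcases hd with ⟨x, hx, hxe⟩ | ⟨x, hx, hxe⟩
          · injection hxe with h; subst h; exact Or.inl ⟨rfl, hx⟩
          · exact absurd hxe (by simp)
        · match p' with
          | Sum.inl p'' =>
            rw [gplus_d_inl] at hd
            obtain ⟨x, hx, hxe⟩ := hd
            injection hxe with h; subst h
            exact Or.inr ⟨p'', (ih1 p'').1 hp', hx⟩
          | Sum.inr p'' =>
            rw [gplus_d_inr] at hd
            obtain ⟨x, hx, hxe⟩ := hd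
            exact absurd hxe (by simp)
      · rintro (⟨rfl, hd⟩ | ⟨p', hp', hd⟩)
        · exact Or.inl ⟨rfl, by rw [gplus_d_none]; exact Or.inl ⟨p, hd, rfl⟩⟩
        · refine Or.inr ⟨Sum.inl p', (ih1 p').2 hp', ?_⟩
          rw [gplus_d_inl]
          exact ⟨p, hd, rfl⟩
    · intro p
      rw [Glu.some_mem_eval_snoc, Glu.some_mem_eval_snoc]
      constructor
      · rintro (⟨rfl, hd⟩ | ⟨p', hp', hd⟩)
        · rw [gplus_d_none] at hd
          rcases hd with ⟨x, hx, hxe⟩ | ⟨x, hx, hxe⟩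
          · exact absurd hxe (by simp)
          · injection hxe with h; subst h; exact Or.inl ⟨rfl, hx⟩
        · match p' with
          | Sum.inl p'' =>
            rw [gplus_d_inl] at hd
            obtain ⟨x, hx, hxe⟩ := hd
            exact absurd hxe (by simp)
          | Sum.inr p'' =>
            rw [gplus_d_inr] at hd
            obtain ⟨x, hx, hxe⟩ := hd
            injection hxe with h; subst h
            exact Or.inr ⟨p'', (ih2 p'').1 hp', hx⟩
      · rintro (⟨rfl, hd⟩ | ⟨p', hp', hd⟩)
        · exact Or.inl ⟨rfl, by rw [gplus_d_none]; exact Or.inr ⟨p, hd, rfl⟩⟩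
        · refine Or.inr ⟨Sum.inr p', (ih2 p').2 hp', ?_⟩
          rw [gplus_d_inr]
          exact ⟨p, hd, rfl⟩

lemma accepts_gplus (G₁ : Glu σ P₁) (G₂ : Glu σ P₂) :
    (gplus G₁ G₂).nfa.accepts = G₁.nfa.accepts + G₂.nfa.accepts := by
  ext w
  rw [Language.mem_add, Glu.mem_accepts, Glu.mem_accepts, Glu.mem_accepts]
  obtain ⟨h1, h2⟩ := gplus_eval G₁ G₂ w
  constructor
  · rintro (⟨rfl, he | he⟩ | ⟨p, hF, hev⟩)
    · exact Or.inl (Or.inl ⟨rfl, he⟩)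
    · exact Or.inr (Or.inl ⟨rfl, he⟩)
    · match p with
      | Sum.inl p => exact Or.inl (Or.inr ⟨p, hF, (h1 p).1 hev⟩)
      | Sum.inr p => exact Or.inr (Or.inr ⟨p, hF, (h2 p).1 hev⟩)
  · rintro ((⟨rfl, he⟩ | ⟨p, hF, hev⟩) | (⟨rfl, he⟩ | ⟨p, hF, hev⟩))
    · exact Or.inl ⟨rfl, Or.inl he⟩
    · exact Or.inr ⟨Sum.inl p, hF, (h1 p).2 hev⟩
    · exact Or.inl ⟨rfl, Or.inr he⟩
    · exact Or.inr ⟨Sum.inr p, hF, (h2 p).2 hev⟩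


lemma snoc_eq_snoc {α : Type} {w u : List α} {a b : α} (h : w ++ [a] = u ++ [b]) :
    w = u ∧ a = b := by
  have h1 := List.append_inj' h rfl
  exact ⟨h1.1, by simpa using h1.2⟩

lemma gcomp_d_none (G₁ : Glu σ P₁) (G₂ : Glu σ P₂) (a : σ) :
    (gcomp G₁ G₂).d none a =
      Sum.inl '' G₁.d none a ∪ {x | G₁.eps ∧ x ∈ Sum.inr '' G₂.d none a} := rfl

lemma gcomp_d_inl (G₁ : Glu σ P₁) (G₂ : Glu σ P₂) (p : P₁) (a : σ) :
    (gcomp G₁ G₂).d (some (Sum.inl p)) a =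
      Sum.inl '' G₁.d (some p) a ∪ {x | p ∈ G₁.F ∧ x ∈ Sum.inr '' G₂.d none a} := rfl

lemma gcomp_d_inr (G₁ : Glu σ P₁) (G₂ : Glu σ P₂) (p : P₂) (a : σ) :
    (gcomp G₁ G₂).d (some (Sum.inr p)) a = Sum.inr '' G₂.d (some p) a := rfl

lemma gcomp_eval (G₁ : Glu σ P₁) (G₂ : Glu σ P₂) (w : List σ) :
    (∀ p, some (Sum.inl p) ∈ (gcomp G₁ G₂).nfa.eval w ↔ some p ∈ G₁.nfa.eval w) ∧
    (∀ p, some (Sum.inr p) ∈ (gcomp G₁ G₂).nfa.eval w ↔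
      ∃ u v, u ∈ G₁.nfa.accepts ∧ some p ∈ G₂.nfa.eval v ∧ w = u ++ v) := by
  induction w using List.reverseRecOn with
  | nil =>
    constructor
    · intro p; simp [Glu.eval_nil, Glu.nfa]
    · intro p
      rw [Glu.eval_nil]
      constructor
      · intro h; simp at h
      · rintro ⟨u, v, hu, hv, he⟩
        obtain ⟨rfl, rfl⟩ := List.append_eq_nil_iff.mp he.symm
        rw [Glu.eval_nil] at hv
        simp at hv
  | append_singleton w a ih =>
    obtain ⟨ih1, ih2⟩ := ih
    constructor
    · intro p
      rw [Glu.some_mem_eval_snoc, Glu.some_mem_eval_snoc]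
      constructor
      · rintro (⟨rfl, hd⟩ | ⟨p', hp', hd⟩)
        · rw [gcomp_d_none] at hd
          rcases hd with ⟨x, hx, hxe⟩ | ⟨-, x, hx, hxe⟩
          · injection hxe with h; subst h; exact Or.inl ⟨rfl, hx⟩
          · exact absurd hxe (by simp)
        · match p' with
          | Sum.inl p'' =>
            rw [gcomp_d_inl] at hd
            rcases hd with ⟨x, hx, hxe⟩ | ⟨-, x, hx, hxe⟩
            · injection hxe with h; subst h
              exact Or.inr ⟨p'', (ih1 p'').1 hp', hx⟩
            · exact absurd hxe (by simp)
          | Sum.inr p'' =>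
            rw [gcomp_d_inr] at hd
            obtain ⟨x, hx, hxe⟩ := hd
            exact absurd hxe (by simp)
      · rintro (⟨rfl, hd⟩ | ⟨p', hp', hd⟩)
        · exact Or.inl ⟨rfl, by rw [gcomp_d_none]; exact Or.inl ⟨p, hd, rfl⟩⟩
        · refine Or.inr ⟨Sum.inl p', (ih1 p').2 hp', ?_⟩
          rw [gcomp_d_inl]
          exact Or.inl ⟨p, hd, rfl⟩
    · intro p
      rw [Glu.some_mem_eval_snoc]
      constructor
      · rintro (⟨rfl, hd⟩ | ⟨p', hp', hd⟩)
        · rw [gcomp_d_none] at hd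
          rcases hd with ⟨x, hx, hxe⟩ | ⟨heps, x, hx, hxe⟩
          · exact absurd hxe (by simp)
          · injection hxe with h; rw [h] at hx
            exact ⟨[], [a], (G₁.mem_accepts []).2 (Or.inl ⟨rfl, heps⟩),
              (G₂.some_mem_eval_snoc [] a p).2 (Or.inl ⟨rfl, hx⟩), rfl⟩
        · match p' with
          | Sum.inl p'' =>
            rw [gcomp_d_inl] at hd
            rcases hd with ⟨x, hx, hxe⟩ | ⟨hF, x, hx, hxe⟩
            · exact absurd hxe (by simp)
            · injection hxe with h; rw [h] at hx
              exact ⟨w, [a], (G₁.mem_accepts w).2 (Or.inr ⟨p'', hF, (ih1 p'').1 hp'⟩),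
                (G₂.some_mem_eval_snoc [] a p).2 (Or.inl ⟨rfl, hx⟩), rfl⟩
          | Sum.inr p'' =>
            rw [gcomp_d_inr] at hd
            obtain ⟨x, hx, hxe⟩ := hd
            injection hxe with h; rw [h] at hx
            obtain ⟨u, v, hu, hv, rfl⟩ := (ih2 p'').1 hp'
            exact ⟨u, v ++ [a], hu,
              (G₂.some_mem_eval_snoc v a p).2 (Or.inr ⟨p'', hv, hx⟩),
              List.append_assoc u v [a]⟩
      · rintro ⟨u, v, hu, hv, he⟩
        rcases List.eq_nil_or_concat v with rfl | ⟨v', b, rfl⟩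
        · rw [Glu.eval_nil] at hv; simp at hv
        · rw [List.concat_eq_append] at hv he
          rw [← List.append_assoc] at he
          obtain ⟨rfl, rfl⟩ := snoc_eq_snoc he
          rcases (G₂.some_mem_eval_snoc v' a p).1 hv with ⟨rfl, hd⟩ | ⟨p'', hp'', hd⟩
          · simp only [List.append_nil] at ih1 ⊢
            rcases (G₁.mem_accepts u).1 hu with ⟨rfl, heps⟩ | ⟨p'', hF, hev⟩
            · exact Or.inl ⟨rfl, by rw [gcomp_d_none]; exact Or.inr ⟨heps, p, hd, rfl⟩⟩
            · refine Or.inr ⟨Sum.inl p'', (ih1 p'').2 hev, ?_⟩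
              rw [gcomp_d_inl]
              exact Or.inr ⟨hF, p, hd, rfl⟩
          · refine Or.inr ⟨Sum.inr p'', (ih2 p'').2 ⟨u, v', hu, hp'', rfl⟩, ?_⟩
            rw [gcomp_d_inr]
            exact ⟨p, hd, rfl⟩

lemma accepts_gcomp (G₁ : Glu σ P₁) (G₂ : Glu σ P₂) :
    (gcomp G₁ G₂).nfa.accepts = G₁.nfa.accepts * G₂.nfa.accepts := by
  ext w
  rw [Glu.mem_accepts, Language.mem_mul]
  obtain ⟨h1, h2⟩ := gcomp_eval G₁ G₂ w
  constructor
  · rintro (⟨rfl, he1, he2⟩ | ⟨p, hF, hev⟩)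
    · exact ⟨[], (G₁.mem_accepts []).2 (Or.inl ⟨rfl, he1⟩), [],
        (G₂.mem_accepts []).2 (Or.inl ⟨rfl, he2⟩), rfl⟩
    · match p with
      | Sum.inl p =>
        obtain ⟨hF1, heps2⟩ := hF
        exact ⟨w, (G₁.mem_accepts w).2 (Or.inr ⟨p, hF1, (h1 p).1 hev⟩), [],
          (G₂.mem_accepts []).2 (Or.inl ⟨rfl, heps2⟩), List.append_nil w⟩
      | Sum.inr p =>
        obtain ⟨u, v, hu, hv, rfl⟩ := (h2 p).1 hev
        exact ⟨u, hu, v, (G₂.mem_accepts v).2 (Or.inr ⟨p, hF, hv⟩), rfl⟩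
  · rintro ⟨u, hu, v, hv, rfl⟩
    rcases (G₂.mem_accepts v).1 hv with ⟨rfl, heps2⟩ | ⟨p, hF2, hev2⟩
    · rcases (G₁.mem_accepts u).1 hu with ⟨rfl, heps1⟩ | ⟨p, hF1, hev1⟩
      · exact Or.inl ⟨rfl, heps1, heps2⟩
      · refine Or.inr ⟨Sum.inl p, ⟨hF1, heps2⟩, ?_⟩
        rw [List.append_nil]
        exact ((gcomp_eval G₁ G₂ u).1 p).2 hev1
    · exact Or.inr ⟨Sum.inr p, hF2, (h2 p).2 ⟨u, v, hu, hev2, rfl⟩⟩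


lemma gstar_d_none (G₁ : Glu σ P₁) (a : σ) : (gstar G₁).d none a = G₁.d none a := rfl

lemma gstar_d_some (G₁ : Glu σ P₁) (p : P₁) (a : σ) :
    (gstar G₁).d (some p) a = G₁.d (some p) a ∪ {x | p ∈ G₁.F ∧ x ∈ G₁.d none a} := rfl

lemma kstar_decomp {l : Language σ} {w : List σ} (hw : w ∈ l∗) (hne : w ≠ []) :
    ∃ u v, u ∈ l∗ ∧ v ∈ l ∧ v ≠ [] ∧ w = u ++ v := by
  obtain ⟨S, rfl, hS⟩ := Language.mem_kstar_iff_exists_nonempty.mp hw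
  rcases List.eq_nil_or_concat S with rfl | ⟨S', v, rfl⟩
  · simp at hne
  · rw [List.concat_eq_append, List.flatten_append]
    refine ⟨S'.flatten, v, ?_, (hS v (by simp)).1, (hS v (by simp)).2, by simp⟩
    exact Language.join_mem_kstar fun y hy => (hS y (by simp [hy])).1

lemma kstar_append {l : Language σ} {u v : List σ} (hu : u ∈ l∗) (hv : v ∈ l) :
    u ++ v ∈ l∗ := by
  have h : u ++ v ∈ l∗ * l := Language.append_mem_mul hu hv
  rw [Language.mul_self_kstar_comm] at h
  rw [← Language.one_add_self_mul_kstar_eq_kstar]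
  exact (Language.mem_add _ _ _).2 (Or.inr h)

lemma gstar_eval (G₁ : Glu σ P₁) (w : List σ) :
    ∀ p, some p ∈ (gstar G₁).nfa.eval w ↔
      ∃ u v, u ∈ G₁.nfa.accepts∗ ∧ some p ∈ G₁.nfa.eval v ∧ w = u ++ v := by
  induction w using List.reverseRecOn with
  | nil =>
    intro p
    rw [Glu.eval_nil]
    constructor
    · intro h; simp at h
    · rintro ⟨u, v, hu, hv, he⟩
      obtain ⟨rfl, rfl⟩ := List.append_eq_nil_iff.mp he.symm
      rw [Glu.eval_nil] at hv
      simp at hv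
  | append_singleton w a ih =>
    intro p
    rw [Glu.some_mem_eval_snoc]
    constructor
    · rintro (⟨rfl, hd⟩ | ⟨p', hp', hd⟩)
      · rw [gstar_d_none] at hd
        exact ⟨[], [a], Language.nil_mem_kstar _,
          (G₁.some_mem_eval_snoc [] a p).2 (Or.inl ⟨rfl, hd⟩), rfl⟩
      · rw [gstar_d_some] at hd
        rcases hd with hd | ⟨hF, hd⟩
        · obtain ⟨u, v, hu, hv, rfl⟩ := (ih p').1 hp'
          exact ⟨u, v ++ [a], hu,
            (G₁.some_mem_eval_snoc v a p).2 (Or.inr ⟨p', hv, hd⟩),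
            List.append_assoc u v [a]⟩
        · obtain ⟨u, v, hu, hv, rfl⟩ := (ih p').1 hp'
          refine ⟨u ++ v, [a], ?_, (G₁.some_mem_eval_snoc [] a p).2 (Or.inl ⟨rfl, hd⟩), rfl⟩
          exact kstar_append hu ((G₁.mem_accepts v).2 (Or.inr ⟨p', hF, hv⟩))
    · rintro ⟨u, v, hu, hv, he⟩
      rcases List.eq_nil_or_concat v with rfl | ⟨v', b, rfl⟩
      · rw [Glu.eval_nil] at hv; simp at hv
      · rw [List.concat_eq_append] at hv he
        rw [← List.append_assoc] at he
        obtain ⟨rfl, rfl⟩ := snoc_eq_snoc he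
        rcases (G₁.some_mem_eval_snoc v' a p).1 hv with ⟨rfl, hd⟩ | ⟨p'', hp'', hd⟩
        · simp only [List.append_nil] at ih ⊢
          rcases List.eq_nil_or_concat u with rfl | hu'
          · exact Or.inl ⟨rfl, by rw [gstar_d_none]; exact hd⟩
          · have hune : u ≠ [] := by
              obtain ⟨u', c, rfl⟩ := hu'
              simp
            obtain ⟨u₂, v₂, hu₂, hv₂, hv₂ne, rfl⟩ := kstar_decomp hu hune
            rcases (G₁.mem_accepts v₂).1 hv₂ with ⟨rfl, -⟩ | ⟨p'', hF, hev⟩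
            · exact absurd rfl hv₂ne
            · refine Or.inr ⟨p'', (ih p'').2 ⟨u₂, v₂, hu₂, hev, rfl⟩, ?_⟩
              rw [gstar_d_some]
              exact Or.inr ⟨hF, hd⟩
        · refine Or.inr ⟨p'', (ih p'').2 ⟨u, v', hu, hp'', rfl⟩, ?_⟩
          rw [gstar_d_some]
          exact Or.inl hd

lemma accepts_gstar (G₁ : Glu σ P₁) :
    (gstar G₁).nfa.accepts = G₁.nfa.accepts∗ := by
  ext w
  rw [Glu.mem_accepts]
  constructor
  · rintro (⟨rfl, -⟩ | ⟨p, hF, hev⟩)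
    · exact Language.nil_mem_kstar _
    · obtain ⟨u, v, hu, hv, rfl⟩ := (gstar_eval G₁ w p).1 hev
      exact kstar_append hu ((G₁.mem_accepts v).2 (Or.inr ⟨p, hF, hv⟩))
  · intro hw
    rcases List.eq_nil_or_concat w with rfl | hw'
    · exact Or.inl ⟨rfl, trivial⟩
    · have hne : w ≠ [] := by obtain ⟨w', c, rfl⟩ := hw'; simp
      obtain ⟨u, v, hu, hv, hvne, rfl⟩ := kstar_decomp hw hne
      rcases (G₁.mem_accepts v).1 hv with ⟨rfl, -⟩ | ⟨p, hF, hev⟩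
      · exact absurd rfl hvne
      · exact Or.inr ⟨p, hF, (gstar_eval G₁ _ p).2 ⟨u, v, hu, hev, rfl⟩⟩


lemma exists_glu (σ : Type) (r : RegularExpression σ) :
    ∃ (P : Type) (_ : Fintype P) (G : Glu σ P),
      Fintype.card P = alphabeticWidth r ∧ G.nfa.accepts = r.matches' := by
  induction r with
  | zero =>
    exact ⟨Empty, inferInstance, gzero, by simp [alphabeticWidth], accepts_gzero⟩
  | epsilon =>
    exact ⟨Empty, inferInstance, geps, by simp [alphabeticWidth], accepts_geps⟩
  | char a =>
    exact ⟨Unit, inferInstance, gchar a, by simp [alphabeticWidth], accepts_gchar a⟩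
  | plus r s ihr ihs =>
    obtain ⟨P₁, f₁, G₁, hc₁, ha₁⟩ := ihr
    obtain ⟨P₂, f₂, G₂, hc₂, ha₂⟩ := ihs
    letI := f₁; letI := f₂
    refine ⟨P₁ ⊕ P₂, inferInstance, gplus G₁ G₂, ?_, ?_⟩
    · exact Fintype.card_sum.trans (congrArg₂ (· + ·) hc₁ hc₂)
    · rw [accepts_gplus, ha₁, ha₂]; rfl
  | comp r s ihr ihs =>
    obtain ⟨P₁, f₁, G₁, hc₁, ha₁⟩ := ihr
    obtain ⟨P₂, f₂, G₂, hc₂, ha₂⟩ := ihs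
    letI := f₁; letI := f₂
    refine ⟨P₁ ⊕ P₂, inferInstance, gcomp G₁ G₂, ?_, ?_⟩
    · exact Fintype.card_sum.trans (congrArg₂ (· + ·) hc₁ hc₂)
    · rw [accepts_gcomp, ha₁, ha₂]; rfl
  | star r ihr =>
    obtain ⟨P₁, f₁, G₁, hc₁, ha₁⟩ := ihr
    letI := f₁
    refine ⟨P₁, inferInstance, gstar G₁, ?_, ?_⟩
    · exact hc₁
    · rw [accepts_gstar, ha₁]; rfl

end GluAux


theorem regex_to_nfa_remembering_last_symbol (σ : Type) [Fintype σ]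
    (r : RegularExpression σ) (hr : 1 ≤ alphabeticWidth r) :
    ∃ (Q : Type) (_ : Fintype Q) (A : NFA σ Q) (q₀ : Q) (Qa : σ → Set Q),
      Fintype.card Q = alphabeticWidth r + 1 ∧
      A.accepts = r.matches' ∧
      A.start = {q₀} ∧
      (∀ q a, q₀ ∉ A.step q a) ∧
      (∀ a b, a ≠ b → Disjoint (Qa a) (Qa b)) ∧
      (∀ a, q₀ ∉ Qa a) ∧
      (∀ q : Q, q ≠ q₀ → ∃ a, q ∈ Qa a) ∧
      (∀ q a, A.step q a ⊆ Qa a) := by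
  obtain ⟨P, fP, G, hc, ha⟩ := GluAux.exists_glu σ r
  letI := fP
  refine ⟨Option P, inferInstance, G.nfa, none,
    fun a => {q | ∃ p, q = some p ∧ G.label p = a}, ?_, ha, rfl, ?_, ?_, ?_, ?_, ?_⟩
  · exact Fintype.card_option.trans (congrArg (· + 1) hc)
  · intro q a h
    obtain ⟨p, -, hp⟩ := h
    exact Option.some_ne_none p hp
  · intro a b hab
    rw [Set.disjoint_left]
    rintro q ⟨p, rfl, hl⟩ ⟨p', hp', hl'⟩
    injection hp' with h
    subst h
    exact hab (hl ▸ hl' ▸ rfl)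
  · rintro a ⟨p, hp, -⟩
    exact absurd hp (by simp)
  · intro q hq
    match q with
    | none => exact absurd rfl hq
    | some p => exact ⟨G.label p, p, rfl, rfl⟩
  · intro q a q' hq'
    obtain ⟨p, hp, rfl⟩ := hq'
    exact ⟨p, rfl, G.hl q a p hp⟩
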